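/- arXiv:math/0201158 — 2 statements merged into one kernel-verified Lean document; each statement's English description precedes it below -/
import Mathlib

section
/- Let (B, c_B) be a smooth compact complex irreducible real algebraic curve and let L ∈ Pic(B) satisfy c_B*(L) = L. Then for every divisor D associated to L there exists a meromorphic function f_D on B such that div(f_D) = c_B(D) − D and f_D · conj(f_D ∘ c_B) is the constant function +1 or the constant function −1. -/
noncomputable section

open Function Set

/-- A smooth compact complex irreducible algebraic curve `B`, equipped with a real
structure `cB` (an antiholomorphic involution of `B`), presented through its
topological space of points, its field of meromorphic functions `Mero`, the
divisor-of-zeros-and-poles map `div`, the antiholomorphic pull-back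
`σ : f ↦ conj (f ∘ cB)` on meromorphic functions, and the evaluation of meromorphic
functions at points of `B` (with value `∞` at poles).  The complex-analytic
structure itself is implicit in this data. -/
structure RealCurve where
  /-- the points of the curve -/
  B : Type
  [topB : TopologicalSpace B]
  [compactB : CompactSpace B]
  [connectedB : ConnectedSpace B]
  [t2B : T2Space B]
  /-- the real structure: a continuous (antiholomorphic) involution of `B` -/
  cB : B → B
  cB_cont : Continuous cB
  cB_invol : Function.Involutive cB
  /-- the field of meromorphic functions on `B` -/
  Mero : Type
  [fieldMero : Field Mero]
  [algebraMero : Algebra ℂ Mero]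
  /-- the divisor of zeros and poles of a meromorphic function
  (with the convention `div 0 = 0`) -/
  div : Mero → (B →₀ ℤ)
  div_mul : ∀ f g : Mero, f ≠ 0 → g ≠ 0 → div (f * g) = div f + div g
  div_algebraMap : ∀ z : ℂ, z ≠ 0 → div (algebraMap ℂ Mero z) = 0
  div_degree : ∀ f : Mero, f ≠ 0 → (div f).sum (fun _ n => n) = 0
  div_eq_zero_iff : ∀ f : Mero, f ≠ 0 → (div f = 0 ↔ ∃ z : ℂ, f = algebraMap ℂ Mero z)
  /-- the antiholomorphic pull-back `σ f = conj (f ∘ cB)`, a ring automorphism of the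
  field of meromorphic functions -/
  sigma : Mero ≃+* Mero
  sigma_invol : ∀ f, sigma (sigma f) = f
  sigma_algebraMap : ∀ z : ℂ,
      sigma (algebraMap ℂ Mero z) = algebraMap ℂ Mero (starRingEnd ℂ z)
  div_sigma : ∀ f : Mero, div (sigma f) = (div f).mapDomain cB
  /-- the value of a meromorphic function at a point of `B`, equal to `∞` at poles -/
  eval : Mero → B → OnePoint ℂ
  eval_algebraMap : ∀ (z : ℂ) (x : B), eval (algebraMap ℂ Mero z) x = (z : OnePoint ℂ)
  eval_sigma : ∀ (f : Mero) (x : B),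
      eval (sigma f) x = OnePoint.map (starRingEnd ℂ) (eval f (cB x))
  eval_infty_iff : ∀ (f : Mero) (x : B), f ≠ 0 →
      (eval f x = OnePoint.infty ↔ div f x < 0)
  eval_zero_iff : ∀ (f : Mero) (x : B), f ≠ 0 →
      (eval f x = ((0 : ℂ) : OnePoint ℂ) ↔ 0 < div f x)

namespace RealCurve

attribute [instance] topB compactB connectedB t2B fieldMero algebraMero

variable (C : RealCurve)

/-- The push-forward `c_B(D)` of a divisor `D` under the real structure. -/
def conjDiv (D : C.B →₀ ℤ) : C.B →₀ ℤ := D.mapDomain C.cB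

/-- A divisor is principal if it is the divisor of a nonzero meromorphic function. -/
def IsPrincipal (D : C.B →₀ ℤ) : Prop := ∃ f : C.Mero, f ≠ 0 ∧ C.div f = D

/-- Linear equivalence of divisors.  A line bundle `L ∈ Pic(B)` is identified with
the linear equivalence class of its associated divisors; e.g. `c_B^*(L) = L` means
`LinEquiv (conjDiv D) D` for the divisors `D` associated to `L`, and
`c_B^*(L) = L^*` means `LinEquiv (conjDiv D) (-D)`. -/
def LinEquiv (D D' : C.B →₀ ℤ) : Prop := C.IsPrincipal (D - D')

/-- The real part `ℝB` of the curve: the fixed point set of `c_B`. -/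
def RB : Type := {x : C.B // C.cB x = x}

instance : TopologicalSpace C.RB := by unfold RB; infer_instance

/-- The meromorphic function `f` takes a non-negative real value (possibly `∞`)
at the point `x`. -/
def NonnegAt (f : C.Mero) (x : C.B) : Prop :=
  C.eval f x = OnePoint.infty ∨ ∃ r : ℝ, 0 ≤ r ∧ C.eval f x = ((r : ℂ) : OnePoint ℂ)

/-- The meromorphic function `f` takes a non-positive real value (possibly `∞`)
at the point `x`. -/
def NonposAt (f : C.Mero) (x : C.B) : Prop :=
  C.eval f x = OnePoint.infty ∨ ∃ r : ℝ, r ≤ 0 ∧ C.eval f x = ((r : ℂ) : OnePoint ℂ)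

end RealCurve

/-- **Lemma (lemmaL).**  Let `(B, c_B)` be a smooth compact complex irreducible real
algebraic curve and let `L ∈ Pic (B)` be a line bundle such that `c_B^*(L) = L`
(i.e. `c_B(D)` is linearly equivalent to `D` for the divisors `D` associated to `L`).
Then for every divisor `D` associated to `L` there exists a meromorphic function
`f_D` on `B` such that `div (f_D) = c_B(D) - D` and
`f_D ⬝ conj (f_D ∘ c_B) = +1` or `f_D ⬝ conj (f_D ∘ c_B) = -1`
(as constant functions; `f ⬝ conj (f ∘ c_B) = f * σ f`). -/
theorem stmt_0 (C : RealCurve) (D : C.B →₀ ℤ)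
    (hL : C.LinEquiv (C.conjDiv D) D) :
    ∃ f : C.Mero, f ≠ 0 ∧ C.div f = C.conjDiv D - D ∧
      (f * C.sigma f = 1 ∨ f * C.sigma f = -1) := by
  obtain ⟨g, hg0, hgdiv⟩ := hL
  have hσg0 : C.sigma g ≠ 0 := fun h => hg0 (by rw [← C.sigma_invol g, h, map_zero])
  -- mapDomain cB is an involution on divisors
  have hmap : ∀ E : C.B →₀ ℤ, (E.mapDomain C.cB).mapDomain C.cB = E := by
    intro E
    rw [← Finsupp.mapDomain_comp]
    have : C.cB ∘ C.cB = id := funext fun x => C.cB_invol x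
    rw [this, Finsupp.mapDomain_id]
  have hdivσ : C.div (C.sigma g) = D - C.conjDiv D := by
    have hsub : (Finsupp.mapDomain C.cB (C.conjDiv D - D) : C.B →₀ ℤ)
        = Finsupp.mapDomain C.cB (C.conjDiv D) - Finsupp.mapDomain C.cB D :=
      map_sub (Finsupp.mapDomain.addMonoidHom C.cB) _ _
    rw [C.div_sigma, hgdiv, hsub]
    show Finsupp.mapDomain C.cB (Finsupp.mapDomain C.cB D) - _ = _
    rw [hmap]
    unfold RealCurve.conjDiv
    abel
  have hprod0 : g * C.sigma g ≠ 0 := mul_ne_zero hg0 hσg0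
  have hdivprod : C.div (g * C.sigma g) = 0 := by
    rw [C.div_mul g (C.sigma g) hg0 hσg0, hgdiv, hdivσ]
    abel
  obtain ⟨z, hz⟩ := (C.div_eq_zero_iff _ hprod0).1 hdivprod
  have hz0 : z ≠ 0 := by
    rintro rfl
    simp only [map_zero] at hz
    exact hprod0 hz
  have hinj : Function.Injective (algebraMap ℂ C.Mero) :=
    (algebraMap ℂ C.Mero).injective
  -- z is real
  have hconj : (starRingEnd ℂ) z = z := by
    apply hinj
    rw [← C.sigma_algebraMap, ← hz, map_mul, C.sigma_invol, mul_comm, hz]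
  have hre : (z.re : ℂ) = z := Complex.conj_eq_iff_re.mp hconj
  set r : ℝ := z.re with hr
  have hr0 : r ≠ 0 := by
    intro h
    apply hz0
    rw [← hre, h, Complex.ofReal_zero]
  set s : ℝ := Real.sqrt |r| with hs
  have hs0 : s ≠ 0 := Real.sqrt_ne_zero'.2 (abs_pos.2 hr0)
  have hss : s * s = |r| := Real.mul_self_sqrt (abs_nonneg r)
  set w : ℂ := ((s : ℂ))⁻¹ with hw
  have hw0 : w ≠ 0 := by
    simp [hw, hs0]
  refine ⟨algebraMap ℂ C.Mero w * g, mul_ne_zero (by simpa using hinj.ne_iff.2 hw0) hg0, ?_, ?_⟩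
  · rw [C.div_mul _ _ (by simpa using hinj.ne_iff.2 hw0) hg0, C.div_algebraMap w hw0, hgdiv,
      zero_add]
  · have hσw : C.sigma (algebraMap ℂ C.Mero w) = algebraMap ℂ C.Mero w := by
      rw [C.sigma_algebraMap]
      congr 1
      simp [hw, ← Complex.ofReal_inv]
    have key : algebraMap ℂ C.Mero w * g * C.sigma (algebraMap ℂ C.Mero w * g)
        = algebraMap ℂ C.Mero (w * w * z) := by
      rw [map_mul, hσw, map_mul, map_mul]
      rw [show algebraMap ℂ C.Mero w * g * (algebraMap ℂ C.Mero w * C.sigma g)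
          = algebraMap ℂ C.Mero w * algebraMap ℂ C.Mero w * (g * C.sigma g) by ring, hz]
    have hwwz : w * w * z = ((|r|⁻¹ * r : ℝ) : ℂ) := by
      rw [hw, ← hre, ← hss]
      push_cast
      field_simp
    rcases lt_or_gt_of_ne hr0 with h | h
    · right
      rw [key, hwwz, abs_of_neg h]
      have : ((-r)⁻¹ * r : ℝ) = -1 := by field_simp
      rw [this]
      push_cast
      simp
    · left
      rw [key, hwwz, abs_of_pos h]
      have : (r⁻¹ * r : ℝ) = 1 := by field_simp
      rw [this]
      push_cast
      simp
end
end

section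
/- Let (B, c_B) be a smooth compact complex irreducible real algebraic curve and L ∈ Pic(B). There exists a real structure on L lifting c_B (an antiholomorphic involution c_L of the total space of L, complex-antilinear on fibers, with p ∘ c_L = c_B ∘ p for the bundle projection p) if and only if c_B*(L) = L and, for every couple (D, f_D) consisting of a divisor D associated to L and a meromorphic function f_D with div(f_D) = c_B(D) − D and f_D · conj(f_D ∘ c_B) = ±1, one has f_D · conj(f_D ∘ c_B) = +1. -/
noncomputable section

open Function Set

/-- A holomorphic line bundle `L` on the curve `C`, presented through its
one-dimensional space `S` of meromorphic sections over the field of meromorphic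
functions, together with the divisor map on meromorphic sections. -/
structure LineBundle (C : RealCurve) where
  /-- the meromorphic sections of `L` -/
  S : Type
  [acg : AddCommGroup S]
  [mod : Module C.Mero S]
  exists_section : ∃ s : S, s ≠ 0
  rank_one : ∀ s t : S, s ≠ 0 → ∃ f : C.Mero, t = f • s
  /-- the divisor of a meromorphic section (with the convention `divS 0 = 0`) -/
  divS : S → (C.B →₀ ℤ)
  divS_smul : ∀ (f : C.Mero) (s : S), f ≠ 0 → s ≠ 0 →
      divS (f • s) = C.div f + divS s

namespace LineBundle

attribute [instance] acg mod

variable {C : RealCurve} (L : LineBundle C)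

/-- `D` is a divisor associated to `L`, i.e. `L = L(D)` (`D` is the divisor of a
nonzero meromorphic section of `L`). -/
def Assoc (D : C.B →₀ ℤ) : Prop := ∃ s : L.S, s ≠ 0 ∧ L.divS s = D

end LineBundle

/-- A real structure on the line bundle `L` lifting `c_B` --- an antiholomorphic,
fiberwise antilinear involution `c_L` of the total space of `L` with
`p ∘ c_L = c_B ∘ p` --- presented through its induced action `s ↦ c_L ∘ s ∘ c_B` on
meromorphic sections: an additive, `σ`-semilinear, involutive map compatible with
divisors. -/
structure LineBundle.RealStructure {C : RealCurve} (L : LineBundle C) where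
  toFun : L.S → L.S
  map_add : ∀ s t : L.S, toFun (s + t) = toFun s + toFun t
  map_smul : ∀ (f : C.Mero) (s : L.S), toFun (f • s) = C.sigma f • toFun s
  invol : ∀ s : L.S, toFun (toFun s) = s
  div_comp : ∀ s : L.S, s ≠ 0 → L.divS (toFun s) = (L.divS s).mapDomain C.cB

section Stmt3Aux

lemma aux_smul_cancel {K V : Type} [Field K] [AddCommGroup V] [Module K V]
    {a b : K} {v : V} (hv : v ≠ 0) (h : a • v = b • v) : a = b := by
  have h0 : (a - b) • v = 0 := by rw [sub_smul, h, sub_self]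
  rcases smul_eq_zero.mp h0 with h' | h'
  · exact sub_eq_zero.mp h'
  · exact absurd h' hv

variable (C : RealCurve)

lemma aux_div_one : C.div 1 = 0 := by
  have h := C.div_algebraMap 1 one_ne_zero
  rwa [map_one] at h

lemma aux_sigma_ne_zero {f : C.Mero} (hf : f ≠ 0) : C.sigma f ≠ 0 := by
  intro h
  exact hf (C.sigma.injective (by simpa using h))

lemma aux_conjDiv_conjDiv (D : C.B →₀ ℤ) : C.conjDiv (C.conjDiv D) = D := by
  unfold RealCurve.conjDiv
  rw [← Finsupp.mapDomain_comp, C.cB_invol.comp_self, Finsupp.mapDomain_id]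

lemma aux_conjDiv_sub (D D' : C.B →₀ ℤ) :
    C.conjDiv (D - D') = C.conjDiv D - C.conjDiv D' :=
  map_sub (Finsupp.mapDomain.addMonoidHom C.cB) D D'

lemma aux_conjDiv_add (D D' : C.B →₀ ℤ) :
    C.conjDiv (D + D') = C.conjDiv D + C.conjDiv D' :=
  map_add (Finsupp.mapDomain.addMonoidHom C.cB) D D'

lemma aux_div_inv {g : C.Mero} (hg : g ≠ 0) : C.div g⁻¹ = - C.div g := by
  have h := C.div_mul g g⁻¹ hg (inv_ne_zero hg)
  rw [mul_inv_cancel₀ hg, aux_div_one] at h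
  exact eq_neg_of_add_eq_zero_right h.symm

lemma aux_alg_ne_zero {z : ℂ} (hz : z ≠ 0) : algebraMap ℂ C.Mero z ≠ 0 := by
  intro h
  exact hz (RingHom.injective (algebraMap ℂ C.Mero) (by simpa using h))

lemma aux_same_div {f g : C.Mero} (hf : f ≠ 0) (hg : g ≠ 0)
    (h : C.div f = C.div g) : ∃ z : ℂ, z ≠ 0 ∧ f = algebraMap ℂ C.Mero z * g := by
  have hfg : f * g⁻¹ ≠ 0 := mul_ne_zero hf (inv_ne_zero hg)
  have hdiv : C.div (f * g⁻¹) = 0 := by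
    rw [C.div_mul f g⁻¹ hf (inv_ne_zero hg), h, aux_div_inv C hg, add_neg_cancel]
  obtain ⟨z, hz⟩ := (C.div_eq_zero_iff _ hfg).mp hdiv
  have hzne : z ≠ 0 := by
    rintro rfl
    rw [map_zero] at hz
    exact hfg hz
  refine ⟨z, hzne, ?_⟩
  rw [← hz]
  field_simp

lemma aux_normalize {D : C.B →₀ ℤ} {g₀ : C.Mero} (hg₀ : g₀ ≠ 0)
    (hdiv : C.div g₀ = C.conjDiv D - D) :
    ∃ g : C.Mero, g ≠ 0 ∧ C.div g = C.conjDiv D - D ∧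
      (g * C.sigma g = 1 ∨ g * C.sigma g = -1) := by
  have hsg : C.sigma g₀ ≠ 0 := aux_sigma_ne_zero C hg₀
  have hprodne : g₀ * C.sigma g₀ ≠ 0 := mul_ne_zero hg₀ hsg
  have hdivprod : C.div (g₀ * C.sigma g₀) = 0 := by
    rw [C.div_mul _ _ hg₀ hsg, C.div_sigma, hdiv]
    show C.conjDiv D - D + C.conjDiv (C.conjDiv D - D) = 0
    rw [aux_conjDiv_sub, aux_conjDiv_conjDiv]
    abel
  obtain ⟨z, hz⟩ := (C.div_eq_zero_iff _ hprodne).mp hdivprod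
  have hzne : z ≠ 0 := by
    rintro rfl; rw [map_zero] at hz; exact hprodne hz
  have hsigma_prod : C.sigma (g₀ * C.sigma g₀) = g₀ * C.sigma g₀ := by
    rw [map_mul, C.sigma_invol, mul_comm]
  have hconj : (starRingEnd ℂ) z = z := by
    have h := hsigma_prod
    rw [hz, C.sigma_algebraMap] at h
    exact RingHom.injective (algebraMap ℂ C.Mero) h
  have hzre : (z.re : ℂ) = z := Complex.conj_eq_iff_re.mp hconj
  set r : ℝ := z.re with hr
  have hrne : r ≠ 0 := by
    intro h0
    apply hzne
    rw [← hzre, h0, Complex.ofReal_zero]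
  set w : ℝ := Real.sqrt |r| with hw
  have hwpos : 0 < w := Real.sqrt_pos.mpr (abs_pos.mpr hrne)
  have hwsq : w * w = |r| := Real.mul_self_sqrt (abs_nonneg r)
  set u : ℂ := ((w : ℂ))⁻¹ with hu
  have hune : u ≠ 0 := inv_ne_zero (by exact_mod_cast hwpos.ne')
  have halgu : algebraMap ℂ C.Mero u ≠ 0 := aux_alg_ne_zero C hune
  refine ⟨g₀ * algebraMap ℂ C.Mero u, mul_ne_zero hg₀ halgu, ?_, ?_⟩
  · rw [C.div_mul _ _ hg₀ halgu, hdiv, C.div_algebraMap u hune, add_zero]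
  · have hconju : (starRingEnd ℂ) u = u := by
      rw [hu, map_inv₀, Complex.conj_ofReal]
    have key : (g₀ * algebraMap ℂ C.Mero u) * C.sigma (g₀ * algebraMap ℂ C.Mero u)
        = algebraMap ℂ C.Mero (z * (u * u)) := by
      rw [map_mul, C.sigma_algebraMap, hconju,
        show g₀ * algebraMap ℂ C.Mero u * (C.sigma g₀ * algebraMap ℂ C.Mero u)
          = g₀ * C.sigma g₀ * (algebraMap ℂ C.Mero u * algebraMap ℂ C.Mero u) by ring,
        hz, ← map_mul, ← map_mul]
    have huu : z * (u * u) = ((r / |r| : ℝ) : ℂ) := by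
      have hwC : ((w : ℂ)) ≠ 0 := by exact_mod_cast hwpos.ne'
      rw [← hzre, hu]
      push_cast
      rw [← hwsq]
      push_cast
      field_simp
    rcases lt_or_gt_of_ne hrne with hneg | hpos
    · right
      rw [key, huu, abs_of_neg hneg, div_neg, div_self hrne]
      rw [show ((-(1:ℝ) : ℝ) : ℂ) = -1 by push_cast; ring, map_neg, map_one]
    · left
      rw [key, huu, abs_of_pos hpos, div_self hrne]
      rw [Complex.ofReal_one, map_one]

end Stmt3Aux


/-- **Lemma (lemmaRL).**  Let `(B, c_B)` be a smooth compact complex irreducible real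
algebraic curve and `L ∈ Pic(B)`.  There exists a real structure on `L` lifting
`c_B` if and only if `c_B^*(L) = L` (i.e. `c_B(D)` is linearly equivalent to `D`
for every divisor `D` associated to `L`) and, for every couple `(D, f_D)` consisting
of a divisor `D` associated to `L` and a meromorphic function `f_D` with
`div (f_D) = c_B(D) - D` and `f_D ⬝ conj (f_D ∘ c_B) = ±1`, one has
`f_D ⬝ conj (f_D ∘ c_B) = +1`.  (Here `f ⬝ conj (f ∘ c_B) = f * σ f`.) -/
theorem stmt_3 (C : RealCurve) (L : LineBundle C) :
    Nonempty L.RealStructure ↔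
      ((∀ D : C.B →₀ ℤ, L.Assoc D → C.LinEquiv (C.conjDiv D) D) ∧
       (∀ (D : C.B →₀ ℤ) (f : C.Mero), L.Assoc D → f ≠ 0 →
          C.div f = C.conjDiv D - D →
          (f * C.sigma f = 1 ∨ f * C.sigma f = -1) → f * C.sigma f = 1)) := by
  constructor
  · rintro ⟨c⟩
    have c_zero : c.toFun 0 = 0 := by
      have h := c.map_add 0 0
      rw [add_zero] at h
      exact (add_eq_left.mp h.symm)
    have c_ne : ∀ s : L.S, s ≠ 0 → c.toFun s ≠ 0 := by
      intro s hs h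
      have hi := c.invol s
      rw [h, c_zero] at hi
      exact hs hi.symm
    have key : ∀ s : L.S, s ≠ 0 → ∃ g : C.Mero, g ≠ 0 ∧
        C.div g = C.conjDiv (L.divS s) - L.divS s ∧ g * C.sigma g = 1 := by
      intro s hs
      obtain ⟨g, hg⟩ := L.rank_one s (c.toFun s) hs
      have hgne : g ≠ 0 := by
        rintro rfl; rw [zero_smul] at hg; exact c_ne s hs hg
      refine ⟨g, hgne, ?_, ?_⟩
      · have h1 := c.div_comp s hs
        rw [hg, L.divS_smul g s hgne hs] at h1
        have h2 : (L.divS s).mapDomain C.cB = C.conjDiv (L.divS s) := rfl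
        rw [h2] at h1
        exact eq_sub_of_add_eq h1
      · have h2 := c.invol s
        rw [hg, c.map_smul, hg, smul_smul] at h2
        have h3 : (C.sigma g * g) • s = (1 : C.Mero) • s := by rw [h2, one_smul]
        have h4 := aux_smul_cancel hs h3
        rw [mul_comm] at h4
        exact h4
    constructor
    · rintro D ⟨s, hs, hD⟩
      obtain ⟨g, hgne, hgdiv, -⟩ := key s hs
      rw [hD] at hgdiv
      exact ⟨g, hgne, hgdiv⟩
    · rintro D f ⟨s, hs, hD⟩ hf hdivf hpm
      obtain ⟨g, hgne, hgdiv, hg1⟩ := key s hs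
      rw [hD] at hgdiv
      obtain ⟨z, hzne, hz⟩ := aux_same_div C hf hgne (by rw [hdivf, hgdiv])
      have hprod : f * C.sigma f = algebraMap ℂ C.Mero (z * (starRingEnd ℂ) z) := by
        rw [hz, map_mul, C.sigma_algebraMap,
          show algebraMap ℂ C.Mero z * g *
              (algebraMap ℂ C.Mero ((starRingEnd ℂ) z) * C.sigma g)
            = algebraMap ℂ C.Mero z * algebraMap ℂ C.Mero ((starRingEnd ℂ) z)
              * (g * C.sigma g) by ring,
          hg1, mul_one, ← map_mul]
      rcases hpm with h1 | hneg
      · exact h1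
      · exfalso
        rw [hprod] at hneg
        have hm1 : algebraMap ℂ C.Mero (z * (starRingEnd ℂ) z)
            = algebraMap ℂ C.Mero (-1) := by rw [hneg, map_neg, map_one]
        have h5 := RingHom.injective (algebraMap ℂ C.Mero) hm1
        rw [Complex.mul_conj] at h5
        have h6 : (Complex.normSq z : ℂ) = ((-1 : ℝ) : ℂ) := by
          rw [h5]; push_cast; ring
        have h7 : Complex.normSq z = -1 := Complex.ofReal_injective h6
        have := Complex.normSq_nonneg z
        linarith
  · rintro ⟨h1, h2⟩
    obtain ⟨s₀, hs₀⟩ := L.exists_section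
    set D := L.divS s₀ with hD
    have hassoc : L.Assoc D := ⟨s₀, hs₀, rfl⟩
    obtain ⟨g₀, hg₀ne, hg₀div⟩ := h1 D hassoc
    obtain ⟨g, hgne, hgdiv, hgpm⟩ := aux_normalize C hg₀ne hg₀div
    have hg1 : g * C.sigma g = 1 := h2 D g hassoc hgne hgdiv hgpm
    choose co hco using fun t => L.rank_one s₀ t hs₀
    have co_unique : ∀ (t : L.S) (f : C.Mero), t = f • s₀ → co t = f := by
      intro t f h
      exact aux_smul_cancel hs₀ (by rw [← hco t, ← h])
    refine ⟨⟨fun t => (C.sigma (co t) * g) • s₀, ?_, ?_, ?_, ?_⟩⟩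
    · intro s t
      have h3 : co (s + t) = co s + co t :=
        co_unique _ _ (by rw [add_smul, ← hco s, ← hco t])
      simp only [h3, map_add, add_mul, add_smul]
    · intro f t
      have h3 : co (f • t) = f * co t :=
        co_unique _ _ (by rw [mul_smul, ← hco t])
      simp only [h3, map_mul, mul_assoc, smul_smul]
    · intro t
      have h3 : co ((C.sigma (co t) * g) • s₀) = C.sigma (co t) * g :=
        co_unique _ _ rfl
      simp only [h3, map_mul, C.sigma_invol]
      have h4 : co t * C.sigma g * g = co t := by
        rw [mul_assoc, mul_comm (C.sigma g) g, hg1, mul_one]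
      rw [h4, ← hco t]
    · intro t ht
      have hcot : co t ≠ 0 := by
        intro h0
        apply ht
        rw [hco t, h0, zero_smul]
      have hsg : C.sigma (co t) ≠ 0 := aux_sigma_ne_zero C hcot
      have hmul : C.sigma (co t) * g ≠ 0 := mul_ne_zero hsg hgne
      have hlhs : L.divS ((C.sigma (co t) * g) • s₀)
          = C.conjDiv (C.div (co t)) + C.conjDiv D := by
        rw [L.divS_smul _ _ hmul hs₀, C.div_mul _ _ hsg hgne, C.div_sigma, hgdiv]
        show C.conjDiv (C.div (co t)) + (C.conjDiv D - D) + D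
          = C.conjDiv (C.div (co t)) + C.conjDiv D
        abel
      have hrhs : L.divS t = C.div (co t) + D := by
        conv_lhs => rw [hco t]
        rw [L.divS_smul _ _ hcot hs₀]
      rw [hlhs, hrhs]
      exact (aux_conjDiv_add C _ _).symm
end
end
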